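/- Let f, g ∈ Z^2 and let T be the triangle with vertices 0, f, g. If |det(f,g)| > 1 then T contains a point e ∈ Z^2, distinct from its vertices, with coprime coordinates. -/

import Mathlib

def det2 (f g : ℤ × ℤ) : ℤ := f.1 * g.2 - f.2 * g.1

/-- Coercion of an integer vector to `ℝ²`. -/
def toR2 (v : ℤ × ℤ) : ℝ × ℝ := ((v.1 : ℝ), (v.2 : ℝ))

lemma tri_mem (F G : ℝ × ℝ) (α β : ℝ) (hα : 0 ≤ α) (hβ : 0 ≤ β) (hs : α + β ≤ 1) :
    α • F + β • G ∈ convexHull ℝ ({(0, 0), F, G} : Set (ℝ × ℝ)) := by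
  have h0 : ((0,0) : ℝ × ℝ) ∈ convexHull ℝ ({(0, 0), F, G} : Set (ℝ × ℝ)) :=
    subset_convexHull ℝ _ (by simp)
  have hF : F ∈ convexHull ℝ ({(0, 0), F, G} : Set (ℝ × ℝ)) :=
    subset_convexHull ℝ _ (by simp)
  have hG : G ∈ convexHull ℝ ({(0, 0), F, G} : Set (ℝ × ℝ)) :=
    subset_convexHull ℝ _ (by simp)
  rcases eq_or_lt_of_le (add_nonneg hα hβ) with h | ht
  · have hα0 : α = 0 := by linarith
    have hβ0 : β = 0 := by linarith
    rw [hα0, hβ0, zero_smul, zero_smul, add_zero]; exact h0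
  · set t := α + β with htdef
    have htne : t ≠ 0 := ne_of_gt ht
    have hq : (α/t) • F + (β/t) • G ∈ convexHull ℝ ({(0, 0), F, G} : Set (ℝ × ℝ)) := by
      refine (convex_convexHull ℝ _).segment_subset hF hG ⟨α/t, β/t, by positivity,
        by positivity, by field_simp; exact htdef.symm, rfl⟩
    refine (convex_convexHull ℝ _).segment_subset h0 hq ⟨1 - t, t, by linarith, le_of_lt ht,
      by ring, ?_⟩
    have : ((0,0) : ℝ × ℝ) = 0 := rfl
    rw [this, smul_zero, zero_add, smul_add, smul_smul, smul_smul,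
      mul_div_cancel₀ _ htne, mul_div_cancel₀ _ htne]

lemma inner_lemma (f g p : ℤ × ℤ) (D a b : ℤ) (hD : 2 ≤ D) (hdet : det2 f g = D)
    (hp1 : D * p.1 = a * f.1 + b * g.1) (hp2 : D * p.2 = a * f.2 + b * g.2)
    (ha : 0 ≤ a) (hb : 0 ≤ b) (hab : a + b ≤ D)
    (hne : ¬(a = 0 ∧ b = 0)) (hbf : b = 0 → a < D) (hag : a = 0 → b < D) :
    ∃ e : ℤ × ℤ, toR2 e ∈ convexHull ℝ ({(0, 0), toR2 f, toR2 g} : Set (ℝ × ℝ)) ∧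
      e ≠ (0, 0) ∧ e ≠ f ∧ e ≠ g ∧ Int.gcd e.1 e.2 = 1 := by
  simp only [det2] at hdet
  have hD0 : D ≠ 0 := by omega
  have hp0 : p ≠ (0, 0) := by
    rintro h
    have h1 : p.1 = 0 := by rw [h]
    have h2 : p.2 = 0 := by rw [h]
    rw [h1] at hp1; rw [h2] at hp2
    have haD : a * D = 0 := by linear_combination (-g.2) * hp1 + g.1 * hp2 - a * hdet
    have hbD : b * D = 0 := by linear_combination f.2 * hp1 - f.1 * hp2 - b * hdet
    refine hne ⟨?_, ?_⟩
    · rcases mul_eq_zero.1 haD with h|h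
      · exact h
      · exact absurd h hD0
    · rcases mul_eq_zero.1 hbD with h|h
      · exact h
      · exact absurd h hD0
  have hgpos : 0 < Int.gcd p.1 p.2 := by
    rcases Nat.eq_zero_or_pos (Int.gcd p.1 p.2) with h | h
    · obtain ⟨h1, h2⟩ := Int.gcd_eq_zero_iff.1 h
      exact absurd (Prod.ext h1 h2) hp0
    · exact h
  set d : ℤ := (Int.gcd p.1 p.2 : ℤ) with hddef
  have hd1 : 1 ≤ d := by rw [hddef]; exact_mod_cast hgpos
  have he1 : p.1 = d * (p.1 / d) := (Int.mul_ediv_cancel' (Int.gcd_dvd_left _ _)).symm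
  have he2 : p.2 = d * (p.2 / d) := (Int.mul_ediv_cancel' (Int.gcd_dvd_right _ _)).symm
  set e1 : ℤ := p.1 / d
  set e2 : ℤ := p.2 / d
  rw [he1] at hp1
  rw [he2] at hp2
  -- hp1 : D * (d * e1) = a * f.1 + b * g.1
  refine ⟨(e1, e2), ?_, ?_, ?_, ?_, Int.gcd_div_gcd_div_gcd hgpos⟩
  · -- membership
    have hdR : (0:ℝ) < (d:ℝ) := by exact_mod_cast hd1.trans_lt' zero_lt_one
    have hDR : (0:ℝ) < (D:ℝ) := by exact_mod_cast (by omega : (0:ℤ) < D)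
    have hdD : (0:ℝ) < (d:ℝ) * D := mul_pos hdR hDR
    have key : toR2 (e1, e2) =
        ((a:ℝ)/((d:ℝ)*D)) • toR2 f + ((b:ℝ)/((d:ℝ)*D)) • toR2 g := by
      have k1 : (D:ℝ) * ((d:ℝ) * e1) = (a:ℝ) * f.1 + (b:ℝ) * g.1 := by exact_mod_cast hp1
      have k2 : (D:ℝ) * ((d:ℝ) * e2) = (a:ℝ) * f.2 + (b:ℝ) * g.2 := by exact_mod_cast hp2
      simp only [toR2, Prod.smul_mk, Prod.mk_add_mk, Prod.mk.injEq, smul_eq_mul]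
      constructor
      · field_simp
        linear_combination k1
      · field_simp
        linear_combination k2
    rw [key]
    refine tri_mem _ _ _ _ (div_nonneg (by exact_mod_cast ha) hdD.le) (div_nonneg (by exact_mod_cast hb) hdD.le) ?_
    rw [← add_div, div_le_one hdD]
    have h1 : (a:ℝ) + b ≤ (D:ℝ) := by exact_mod_cast hab
    have h2 : (1:ℝ) ≤ (d:ℝ) := by exact_mod_cast hd1
    nlinarith
  · -- ≠ 0
    rintro h
    have h1 : e1 = 0 := congrArg Prod.fst h
    have h2 : e2 = 0 := congrArg Prod.snd h
    exact hp0 (Prod.ext (by rw [he1, h1, mul_zero]) (by rw [he2, h2, mul_zero]))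
  · -- ≠ f
    rintro h
    have h1 : e1 = f.1 := congrArg Prod.fst h
    have h2 : e2 = f.2 := congrArg Prod.snd h
    rw [h1] at hp1; rw [h2] at hp2
    have hbD : b * D = 0 := by linear_combination f.2 * hp1 - f.1 * hp2 - b * hdet
    have hb0 : b = 0 := by
      rcases mul_eq_zero.1 hbD with h'|h'
      · exact h'
      · exact absurd h' hD0
    have haD : a * D = d * D * D := by
      linear_combination (-g.2) * hp1 + g.1 * hp2 - a * hdet + (d * D) * hdet
    have : a = d * D := mul_right_cancel₀ hD0 haD
    have := hbf hb0
    nlinarith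
  · -- ≠ g
    rintro h
    have h1 : e1 = g.1 := congrArg Prod.fst h
    have h2 : e2 = g.2 := congrArg Prod.snd h
    rw [h1] at hp1; rw [h2] at hp2
    have haD : a * D = 0 := by linear_combination (-g.2) * hp1 + g.1 * hp2 - a * hdet
    have ha0 : a = 0 := by
      rcases mul_eq_zero.1 haD with h'|h'
      · exact h'
      · exact absurd h' hD0
    have hbD : b * D = d * D * D := by
      linear_combination f.2 * hp1 - f.1 * hp2 - b * hdet + (d * D) * hdet
    have : b = d * D := mul_right_cancel₀ hD0 hbD
    have := hag ha0
    nlinarith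

lemma reduce_lemma (f g v : ℤ × ℤ) (hD : 2 ≤ det2 f g)
    (hv : ¬(det2 f g ∣ det2 v g ∧ det2 f g ∣ det2 f v)) :
    ∃ e : ℤ × ℤ, toR2 e ∈ convexHull ℝ ({(0, 0), toR2 f, toR2 g} : Set (ℝ × ℝ)) ∧
      e ≠ (0, 0) ∧ e ≠ f ∧ e ≠ g ∧ Int.gcd e.1 e.2 = 1 := by
  set D := det2 f g with hDdef
  set A := det2 v g with hAdef
  set B := det2 f v with hBdef
  have hD0 : (0:ℤ) < D := by omega
  have kid1 : A * f.1 + B * g.1 = D * v.1 := by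
    simp only [hAdef, hBdef, hDdef, det2]; ring
  have kid2 : A * f.2 + B * g.2 = D * v.2 := by
    simp only [hAdef, hBdef, hDdef, det2]; ring
  set a0 := A % D with ha0def
  set b0 := B % D with hb0def
  have hA : D * (A / D) + a0 = A := Int.mul_ediv_add_emod A D
  have hB : D * (B / D) + b0 = B := Int.mul_ediv_add_emod B D
  have ha0 : 0 ≤ a0 := Int.emod_nonneg A (by omega)
  have hb0 : 0 ≤ b0 := Int.emod_nonneg B (by omega)
  have ha0' : a0 < D := Int.emod_lt_of_pos A hD0
  have hb0' : b0 < D := Int.emod_lt_of_pos B hD0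
  have hnz : ¬(a0 = 0 ∧ b0 = 0) := by
    rintro ⟨h1, h2⟩
    exact hv ⟨Int.dvd_of_emod_eq_zero h1, Int.dvd_of_emod_eq_zero h2⟩
  set p0 : ℤ × ℤ := (v.1 - (A / D) * f.1 - (B / D) * g.1,
    v.2 - (A / D) * f.2 - (B / D) * g.2) with hp0def
  have hp1 : D * p0.1 = a0 * f.1 + b0 * g.1 := by
    simp only [hp0def]
    linear_combination (-1) * kid1 - f.1 * hA - g.1 * hB
  have hp2 : D * p0.2 = a0 * f.2 + b0 * g.2 := by
    simp only [hp0def]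
    linear_combination (-1) * kid2 - f.2 * hA - g.2 * hB
  rcases le_or_gt (a0 + b0) D with hc | hc
  · exact inner_lemma f g p0 D a0 b0 hD rfl hp1 hp2 ha0 hb0 hc hnz
      (fun _ => ha0') (fun _ => hb0')
  · set p1 : ℤ × ℤ := (f.1 + g.1 - p0.1, f.2 + g.2 - p0.2) with hp1def
    have hq1 : D * p1.1 = (D - a0) * f.1 + (D - b0) * g.1 := by
      simp only [hp1def]; linear_combination (-1) * hp1
    have hq2 : D * p1.2 = (D - a0) * f.2 + (D - b0) * g.2 := by
      simp only [hp1def]; linear_combination (-1) * hp2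
    exact inner_lemma f g p1 D (D - a0) (D - b0) hD rfl hq1 hq2 (by omega) (by omega)
      (by omega) (by omega) (by omega) (by omega)

lemma helper_lemma (f g : ℤ × ℤ) (hD : 2 ≤ det2 f g) :
    ∃ e : ℤ × ℤ, toR2 e ∈ convexHull ℝ ({(0, 0), toR2 f, toR2 g} : Set (ℝ × ℝ)) ∧
      e ≠ (0, 0) ∧ e ≠ f ∧ e ≠ g ∧ Int.gcd e.1 e.2 = 1 := by
  set D := det2 f g with hDdef
  by_cases h1 : D ∣ det2 ((1,0) : ℤ × ℤ) g ∧ D ∣ det2 f ((1,0) : ℤ × ℤ)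
  · by_cases h2 : D ∣ det2 ((0,1) : ℤ × ℤ) g ∧ D ∣ det2 f ((0,1) : ℤ × ℤ)
    · exfalso
      have hg2 : D ∣ g.2 := by simpa [det2] using h1.1
      have hf2 : D ∣ f.2 := by
        have := h1.2
        simp only [det2] at this
        simpa using (dvd_neg.2 this)
      have hg1 : D ∣ g.1 := by
        have := h2.1
        simp only [det2] at this
        simpa using (dvd_neg.2 this)
      have hf1 : D ∣ f.1 := by simpa [det2] using h2.2
      obtain ⟨x1, hx1⟩ := hf1
      obtain ⟨x2, hx2⟩ := hf2
      obtain ⟨y1, hy1⟩ := hg1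
      obtain ⟨y2, hy2⟩ := hg2
      have hDD : D = D * D * (x1 * y2 - x2 * y1) := by
        conv_lhs => rw [hDdef]
        simp only [det2]
        rw [hx1, hx2, hy1, hy2]; ring
      have h1' : (1:ℤ) = D * (x1 * y2 - x2 * y1) := by
        have hD0 : D ≠ 0 := by omega
        exact mul_left_cancel₀ hD0 (by linear_combination hDD)
      have : D ∣ 1 := ⟨_, h1'⟩
      have := Int.le_of_dvd one_pos this
      omega
    · exact reduce_lemma f g (0,1) hD h2
  · exact reduce_lemma f g (1,0) hD h1

theorem stmt11_triangle_lattice_point (f g : ℤ × ℤ) (hdet : 1 < |det2 f g|) :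
    ∃ e : ℤ × ℤ, toR2 e ∈ convexHull ℝ ({(0, 0), toR2 f, toR2 g} : Set (ℝ × ℝ)) ∧
      e ≠ (0, 0) ∧ e ≠ f ∧ e ≠ g ∧ Int.gcd e.1 e.2 = 1 := by
  rcases le_or_gt 0 (det2 f g) with h | h
  · exact helper_lemma f g (by rw [abs_of_nonneg h] at hdet; omega)
  · have h' : 2 ≤ det2 g f := by
      have : det2 g f = -det2 f g := by simp [det2]; ring
      rw [abs_of_neg h] at hdet; omega
    obtain ⟨e, hm, h0, hg', hf', hgcd⟩ := helper_lemma g f h'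
    have hset : ({(0, 0), toR2 g, toR2 f} : Set (ℝ × ℝ)) = {(0, 0), toR2 f, toR2 g} := by
      rw [Set.pair_comm (toR2 g) (toR2 f)]
    rw [hset] at hm
    exact ⟨e, hm, h0, hf', hg', hgcd⟩
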